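/- For every skew shape δ = λ/μ and every k ∈ W_δ, the Schur multiple zeta series ζ_δ(k) = Σ_{N∈SSYT_δ} ∏_{(i,j)∈D_δ} n_{ij}^(−k_{ij}) converges absolutely. -/

import Mathlib

/-- `N` is a semistandard Young tableau on the (finite) cell set `D`:
entries are positive, weakly increasing along rows, strictly increasing
down columns. -/
def IsSSYT (D : Finset (ℕ × ℕ)) (N : {p : ℕ × ℕ // p ∈ D} → ℕ) : Prop :=
  (∀ p, 0 < N p) ∧
  (∀ p q : {p : ℕ × ℕ // p ∈ D}, p.1.1 = q.1.1 → p.1.2 ≤ q.1.2 → N p ≤ N q) ∧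
  (∀ p q : {p : ℕ × ℕ // p ∈ D}, p.1.2 = q.1.2 → p.1.1 < q.1.1 → N p < N q)

/-- One step toward a corner: move right if possible, else down, else stay. -/
def stepD (D : Finset (ℕ × ℕ)) (p : {p : ℕ × ℕ // p ∈ D}) : {p : ℕ × ℕ // p ∈ D} :=
  if h : (p.1.1, p.1.2 + 1) ∈ D then ⟨_, h⟩
  else if h2 : (p.1.1 + 1, p.1.2) ∈ D then ⟨_, h2⟩ else p

/-- Fuel bound for the iteration of `stepD`. -/
def KD (D : Finset (ℕ × ℕ)) : ℕ := (D.sup fun q => q.1 + q.2) + 1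

/-- Corner map: iterate the step enough times to reach a corner. -/
def cmapD (D : Finset (ℕ × ℕ)) (p : {p : ℕ × ℕ // p ∈ D}) : {p : ℕ × ℕ // p ∈ D} :=
  (stepD D)^[KD D] p

lemma stepD_le {D : Finset (ℕ × ℕ)} {N : {p : ℕ × ℕ // p ∈ D} → ℕ}
    (h : IsSSYT D N) (p : {p : ℕ × ℕ // p ∈ D}) : N p ≤ N (stepD D p) := by
  unfold stepD
  split_ifs with h1 h2
  · exact h.2.1 p ⟨_, h1⟩ rfl (Nat.le_succ _)
  · exact le_of_lt (h.2.2 p ⟨_, h2⟩ rfl (Nat.lt_succ_self _))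
  · exact le_rfl

lemma cmapD_le {D : Finset (ℕ × ℕ)} {N : {p : ℕ × ℕ // p ∈ D} → ℕ}
    (h : IsSSYT D N) (p : {p : ℕ × ℕ // p ∈ D}) : N p ≤ N (cmapD D p) := by
  unfold cmapD
  generalize KD D = n
  induction n with
  | zero => exact le_rfl
  | succ n ih =>
      rw [Function.iterate_succ_apply']
      exact ih.trans (stepD_le h _)

lemma stepD_sum {D : Finset (ℕ × ℕ)} {p : {p : ℕ × ℕ // p ∈ D}}
    (h : stepD D p ≠ p) :
    (stepD D p).1.1 + (stepD D p).1.2 = p.1.1 + p.1.2 + 1 := by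
  unfold stepD at *
  split_ifs with h1 h2
  · dsimp only; omega
  · dsimp only; omega
  · exact absurd (by rw [dif_neg h1, dif_neg h2]) h

lemma stepD_fix_corner {D : Finset (ℕ × ℕ)} {q : {p : ℕ × ℕ // p ∈ D}}
    (hfix : stepD D q = q) :
    (q.1.1 + 1, q.1.2) ∉ D ∧ (q.1.1, q.1.2 + 1) ∉ D := by
  by_cases h1 : (q.1.1, q.1.2 + 1) ∈ D
  · exfalso
    unfold stepD at hfix
    rw [dif_pos h1] at hfix
    have := congrArg (fun r => r.1.2) hfix
    simp at this
  refine ⟨?_, h1⟩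
  by_cases h2 : (q.1.1 + 1, q.1.2) ∈ D
  · exfalso
    unfold stepD at hfix
    rw [dif_neg h1, dif_pos h2] at hfix
    have := congrArg (fun r => r.1.1) hfix
    simp at this
  · exact h2

lemma cmapD_fix {D : Finset (ℕ × ℕ)} (p : {p : ℕ × ℕ // p ∈ D}) :
    stepD D (cmapD D p) = cmapD D p := by
  have hbound : ∀ q : {p : ℕ × ℕ // p ∈ D}, q.1.1 + q.1.2 < KD D := by
    intro q
    have h2 : q.1.1 + q.1.2 ≤ D.sup (fun q => q.1 + q.2) :=
      Finset.le_sup (f := fun q : ℕ × ℕ => q.1 + q.2) q.2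
    unfold KD; omega
  have claim : ∀ n : ℕ, ∀ p : {p : ℕ × ℕ // p ∈ D},
      stepD D ((stepD D)^[n] p) = (stepD D)^[n] p ∨
      p.1.1 + p.1.2 + n ≤ ((stepD D)^[n] p).1.1 + ((stepD D)^[n] p).1.2 := by
    intro n
    induction n with
    | zero => intro p; right; simp
    | succ n ih =>
        intro p
        rcases ih p with hfix | hgrow
        · left
          rw [Function.iterate_succ_apply', hfix, hfix]
        · by_cases hf : stepD D ((stepD D)^[n] p) = (stepD D)^[n] p
          · left
            rw [Function.iterate_succ_apply', hf, hf]
          · right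
            rw [Function.iterate_succ_apply']
            have := stepD_sum hf
            omega
  rcases claim (KD D) p with hfix | hgrow
  · exact hfix
  · exact absurd hgrow (by have := hbound ((stepD D)^[KD D] p); omega)

/-- Summability of product functions on finite pi-types, `Fin` case. -/
lemma summable_pi_prod_fin (f : ℕ → ℝ) (h0 : ∀ x, 0 ≤ f x) (hf : Summable f) :
    ∀ n : ℕ, Summable fun M : Fin n → ℕ => ∏ i, f (M i) := by
  intro n
  induction n with
  | zero =>
      haveI : Unique (Fin 0 → ℕ) := ⟨⟨fun i => i.elim0⟩, fun g => funext fun i => i.elim0⟩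
      haveI : Finite (Fin 0 → ℕ) := Finite.of_subsingleton
      exact Summable.of_finite
  | succ n ih =>
      have h2 := Summable.mul_of_nonneg (f := f) (g := fun M : Fin n → ℕ => ∏ i, f (M i))
        hf ih (fun x => h0 x) (fun M => Finset.prod_nonneg fun i _ => h0 _)
      have h3 := Summable.comp_injective
        (f := fun x : ℕ × (Fin n → ℕ) => f x.1 * ∏ i, f (x.2 i))
        (i := ⇑(Fin.consEquiv fun _ => ℕ).symm) h2 (Fin.consEquiv fun _ => ℕ).symm.injective
      refine h3.congr fun M => ?_
      simp only [Function.comp_apply, Fin.consEquiv, Equiv.coe_fn_symm_mk]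
      rw [Fin.prod_univ_succ]; rfl

/-- Summability of product functions on finite pi-types. -/
lemma summable_pi_prod {ι : Type*} [Fintype ι] (f : ℕ → ℝ)
    (h0 : ∀ x, 0 ≤ f x) (hf : Summable f) :
    Summable fun M : ι → ℕ => ∏ i, f (M i) := by
  classical
  let e := Fintype.equivFin ι
  have h1 := summable_pi_prod_fin f h0 hf (Fintype.card ι)
  have h3 := Summable.comp_injective
    (f := fun M : Fin (Fintype.card ι) → ℕ => ∏ i, f (M i))
    (i := ⇑(Equiv.arrowCongr e (Equiv.refl ℕ)))
    h1 (Equiv.arrowCongr e (Equiv.refl ℕ)).injective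
  refine h3.congr fun M => ?_
  simp only [Function.comp_apply, Equiv.arrowCongr_apply, Equiv.refl_apply]
  exact Equiv.prod_comp e.symm fun p => f (M p)

/-- Products of factors `≥ 1` are `≥ 1` (real version). -/
lemma one_le_prod_real {ι : Type*} {s : Finset ι} {f : ι → ℝ}
    (h : ∀ i ∈ s, 1 ≤ f i) : 1 ≤ ∏ i ∈ s, f i := by
  calc (1:ℝ) = ∏ _i ∈ s, (1:ℝ) := (Finset.prod_const_one).symm
    _ ≤ ∏ i ∈ s, f i := Finset.prod_le_prod (fun i _ => zero_le_one) h

/-- Enlarging the index set can only increase a product of factors `≥ 1`. -/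
lemma prod_le_prod_subset_real {ι : Type*} {s t : Finset ι} (hst : s ⊆ t) {f : ι → ℝ}
    (h1 : ∀ i ∈ t, 1 ≤ f i) : ∏ i ∈ s, f i ≤ ∏ i ∈ t, f i := by
  classical
  rw [← Finset.prod_sdiff hst]
  have ha : 1 ≤ ∏ i ∈ t \ s, f i :=
    one_le_prod_real fun i hi => h1 i (Finset.mem_sdiff.mp hi).1
  have hb : 0 ≤ ∏ i ∈ s, f i :=
    Finset.prod_nonneg fun i hi => le_trans zero_le_one (h1 i (hst hi))
  exact le_mul_of_one_le_left hb ha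

set_option maxHeartbeats 1000000 in
/-- **Absolute convergence of Schur multiple zeta values.** Let `λ, μ` be
partitions (non-increasing, with `μᵢ ≤ λᵢ`) and let `D` be the finite cell set
of the skew shape `δ = λ/μ`, i.e. `(i,j) ∈ D ↔ μᵢ < j ≤ λᵢ`. For `k ∈ W_δ`
(all entries `≥ 1` and entries at corners `≥ 2`), the series
`ζ_δ(k) = ∑_{N ∈ SSYT_δ} ∏_{(i,j)∈D} n_{ij}^{-k_{ij}}` converges absolutely
(all terms are nonnegative, so summability is absolute convergence). -/
theorem schurZeta_summable (lam mu : ℕ → ℕ)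
    (hlam : Antitone lam) (hmu : Antitone mu) (hle : ∀ i, mu i ≤ lam i)
    (D : Finset (ℕ × ℕ))
    (hD : ∀ p : ℕ × ℕ, p ∈ D ↔ mu p.1 < p.2 ∧ p.2 ≤ lam p.1)
    (k : {p : ℕ × ℕ // p ∈ D} → ℕ)
    (hk1 : ∀ p, 1 ≤ k p)
    (hk2 : ∀ p : {p : ℕ × ℕ // p ∈ D},
      (p.1.1 + 1, p.1.2) ∉ D → (p.1.1, p.1.2 + 1) ∉ D → 2 ≤ k p) :
    Summable (fun N : {N : {p : ℕ × ℕ // p ∈ D} → ℕ // IsSSYT D N} =>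
      ∏ p, ((N.1 p : ℝ) ^ k p)⁻¹) := by
  classical
  by_cases hDe : D = ∅
  · subst hDe
    haveI : IsEmpty {p : ℕ × ℕ // p ∈ (∅ : Finset (ℕ × ℕ))} :=
      ⟨fun p => absurd p.2 (Finset.notMem_empty _)⟩
    haveI : Finite {N : {p : ℕ × ℕ // p ∈ (∅ : Finset (ℕ × ℕ))} → ℕ // IsSSYT ∅ N} :=
      Finite.of_subsingleton
    exact Summable.of_finite
  -- main case
  have hd1 : 1 ≤ D.card := Finset.card_pos.mpr (Finset.nonempty_of_ne_empty hDe)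
  set d : ℕ := D.card with hdd
  have hdR : (0 : ℝ) < (d : ℝ) := by exact_mod_cast hd1
  set r : ℝ := 1 + (d : ℝ)⁻¹ with hrdef
  have hr1 : 1 < r := by
    have : (0:ℝ) < (d:ℝ)⁻¹ := inv_pos.mpr hdR
    rw [hrdef]; linarith
  have hfsum : Summable (fun m : ℕ => ((m : ℝ) ^ r)⁻¹) :=
    Real.summable_nat_rpow_inv.mpr hr1
  have hf0 : ∀ m : ℕ, 0 ≤ ((m : ℝ) ^ r)⁻¹ :=
    fun m => inv_nonneg.mpr (Real.rpow_nonneg (Nat.cast_nonneg m) r)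
  have hg : Summable (fun M : {p : ℕ × ℕ // p ∈ D} → ℕ => ∏ p, ((M p : ℝ) ^ r)⁻¹) :=
    summable_pi_prod (fun m : ℕ => ((m : ℝ) ^ r)⁻¹) hf0 hfsum
  have hg' := Summable.comp_injective
    (f := fun M : {p : ℕ × ℕ // p ∈ D} → ℕ => ∏ p, ((M p : ℝ) ^ r)⁻¹)
    (i := (Subtype.val : {N : {p : ℕ × ℕ // p ∈ D} → ℕ // IsSSYT D N} → _))
    hg Subtype.val_injective
  refine Summable.of_nonneg_of_le (fun N => ?_) (fun N => ?_) hg'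
  · exact Finset.prod_nonneg fun p _ =>
      inv_nonneg.mpr (pow_nonneg (Nat.cast_nonneg _) _)
  · obtain ⟨n, hN⟩ := N
    simp only [Function.comp_apply]
    have h1 : ∀ p, 1 ≤ n p := fun p => hN.1 p
    have h1R : ∀ p : {p : ℕ × ℕ // p ∈ D}, (1:ℝ) ≤ (n p : ℝ) := fun p => by
      exact_mod_cast h1 p
    set Cor : Finset {p : ℕ × ℕ // p ∈ D} :=
      Finset.univ.filter (fun q => stepD D q = q) with hCor
    set A : ℝ := ∏ p, (n p : ℝ) with hA
    set B : ℝ := ∏ q ∈ Cor, (n q : ℝ) with hB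
    have hA1 : (1:ℝ) ≤ A := by
      rw [hA]; exact one_le_prod_real fun p _ => h1R p
    have hB1 : (1:ℝ) ≤ B := by
      rw [hB]; exact one_le_prod_real fun q _ => h1R q
    have hApos : (0:ℝ) < A := lt_of_lt_of_le zero_lt_one hA1
    have hcard_cell : Fintype.card {p : ℕ × ℕ // p ∈ D} = d := Fintype.card_coe D
    -- A ≤ B ^ d
    have hAB : A ≤ B ^ d := by
      have hpart := Finset.prod_fiberwise Finset.univ (cmapD D)
        (fun p : {p : ℕ × ℕ // p ∈ D} => (n p : ℝ))
      rw [hA, ← hpart]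
      have hstep : ∀ q : {p : ℕ × ℕ // p ∈ D},
          (∏ p ∈ Finset.univ.filter (fun p => cmapD D p = q), (n p : ℝ)) ≤
          (if stepD D q = q then (n q : ℝ) ^ d else 1) := by
        intro q
        by_cases hq : stepD D q = q
        · rw [if_pos hq]
          calc (∏ p ∈ Finset.univ.filter (fun p => cmapD D p = q), (n p : ℝ))
              ≤ ∏ _p ∈ Finset.univ.filter (fun p => cmapD D p = q), (n q : ℝ) := by
                refine Finset.prod_le_prod (fun p _ => by positivity) fun p hp => ?_
                have hpq : cmapD D p = q := (Finset.mem_filter.mp hp).2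
                have := cmapD_le hN p
                rw [hpq] at this
                exact_mod_cast this
            _ = (n q : ℝ) ^ (Finset.univ.filter (fun p => cmapD D p = q)).card :=
                Finset.prod_const _
            _ ≤ (n q : ℝ) ^ d := by
                refine pow_le_pow_right₀ (h1R q) ?_
                calc (Finset.univ.filter (fun p => cmapD D p = q)).card
                    ≤ Finset.univ.card := Finset.card_filter_le _ _
                  _ = d := by rw [Finset.card_univ, hcard_cell]
        · rw [if_neg hq]
          have hempty : Finset.univ.filter
              (fun p : {p : ℕ × ℕ // p ∈ D} => cmapD D p = q) = ∅ := by
            refine Finset.filter_eq_empty_iff.mpr fun p _ => ?_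
            intro hpq
            exact hq (by rw [← hpq]; exact cmapD_fix p)
          rw [hempty, Finset.prod_empty]
      calc (∏ q, ∏ p ∈ Finset.univ.filter (fun p => cmapD D p = q), (n p : ℝ))
          ≤ ∏ q, (if stepD D q = q then (n q : ℝ) ^ d else 1) :=
            Finset.prod_le_prod
              (fun q _ => Finset.prod_nonneg fun p _ => by positivity) fun q _ => hstep q
        _ = ∏ q ∈ Cor, (n q : ℝ) ^ d := by
            rw [hCor, Finset.prod_filter]
        _ = B ^ d := by rw [hB, Finset.prod_pow]
    -- A ^ r ≤ ∏ (n p) ^ k p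
    have hABr : A ^ ((d:ℝ)⁻¹) ≤ B := by
      have h2 := Real.rpow_le_rpow (le_of_lt hApos) hAB (inv_nonneg.mpr hdR.le)
      rwa [← Real.rpow_natCast B d, ← Real.rpow_mul (by linarith : (0:ℝ) ≤ B),
        mul_inv_cancel₀ (ne_of_gt hdR), Real.rpow_one] at h2
    have hAr : A ^ r ≤ A * B := by
      rw [hrdef, Real.rpow_add hApos, Real.rpow_one]
      exact mul_le_mul_of_nonneg_left hABr (by linarith)
    have hkey : A * B ≤ ∏ p, ((n p : ℝ) ^ k p) := by
      have hsplit : (∏ p, ((n p : ℝ) ^ k p)) = A * ∏ p, (n p : ℝ) ^ (k p - 1) := by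
        rw [hA, ← Finset.prod_mul_distrib]
        refine Finset.prod_congr rfl fun p _ => ?_
        conv_lhs => rw [show k p = (k p - 1) + 1 from (Nat.succ_pred_eq_of_pos (hk1 p)).symm]
        rw [pow_succ]
        ring
      rw [hsplit]
      refine mul_le_mul_of_nonneg_left ?_ (by linarith)
      calc B = ∏ q ∈ Cor, (n q : ℝ) := hB
        _ ≤ ∏ q ∈ Cor, (n q : ℝ) ^ (k q - 1) := by
            refine Finset.prod_le_prod (fun q _ => by positivity) fun q hq => ?_
            rw [hCor] at hq
            have hfix : stepD D q = q := (Finset.mem_filter.mp hq).2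
            have hc := stepD_fix_corner hfix
            have hk := hk2 q hc.1 hc.2
            calc (n q : ℝ) = (n q : ℝ) ^ 1 := (pow_one _).symm
              _ ≤ (n q : ℝ) ^ (k q - 1) := pow_le_pow_right₀ (h1R q) (by omega)
        _ ≤ ∏ p, (n p : ℝ) ^ (k p - 1) := by
            rw [hCor]
            exact prod_le_prod_subset_real (Finset.filter_subset _ _)
              (fun p _ => one_le_pow₀ (h1R p))
    have hfinal : A ^ r ≤ ∏ p, ((n p : ℝ) ^ k p) := hAr.trans hkey
    have lhs_eq : (∏ p, ((n p : ℝ) ^ k p)⁻¹) = (∏ p, (n p : ℝ) ^ k p)⁻¹ :=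
      Finset.prod_inv_distrib _
    have prs : (∏ p, ((n p : ℝ) ^ r)) = A ^ r := by
      rw [Real.finset_prod_rpow _ _ (fun p _ => Nat.cast_nonneg _) r, ← hA]
    have rhs_eq : (∏ p, ((n p : ℝ) ^ r)⁻¹) = (A ^ r)⁻¹ := by
      rw [Finset.prod_inv_distrib, prs]
    rw [lhs_eq, rhs_eq]
    exact inv_anti₀ (Real.rpow_pos_of_pos hApos r) hfinal
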